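/- For positive integers a₀,…,a_{r+1} with sum s and positive integers ξ₀,…,ξ_{r+1}, applying the raising operators in the order (Π_{i=0}^{r} e_i^{a_{i+1}+a_{i+2}+⋯+a_{r+1}}) to the monomial X^a = Π X_j^{a_j}, where e_i X^b = [ξ_{i+1} b_{i+1}] X^{b+e_i−e_{i+1}}, yields (Π_{i=1}^{r+1} [a_i + a_{i+1} + ⋯ + a_{r+1}]^{ξ_i}!) · X₀^{s}, with [m]^k! = [km][k(m−1)]⋯[k]. In particular the result is a nonzero multiple of X₀^s. -/

import Mathlib

noncomputable section

/-- The field ℚ(q) of rational functions over ℚ. -/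
abbrev K : Type := RatFunc ℚ

/-- The indeterminate q. -/
def q : K := RatFunc.X

/-- The quantum integer [m]. -/
def qint (m : ℤ) : K := (q ^ m - q ^ (-m)) / (q - q⁻¹)

/-- The modified q-factorial [m]^k! = [km][k(m−1)]⋯[k]. -/
def qfact (k m : ℕ) : K := ∏ j ∈ Finset.range m, qint ((k * (j + 1) : ℕ) : ℤ)

/-- The divided-power monomial X^{(a)} = Π_i X_i^{a_i}/([a_i]^{ξ_i}!). -/
def Xdiv (n : ℕ) (ξ : Fin n → ℕ) (a : Fin n →₀ ℕ) : MvPolynomial (Fin n) K :=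
  (∏ i : Fin n, (qfact (ξ i) (a i))⁻¹) • MvPolynomial.monomial a (1 : K)

lemma q_pow_ne_one {n : ℕ} (hn : 0 < n) : q ^ n ≠ 1 := by
  intro h
  have hX : (q : K) ^ n = algebraMap (Polynomial ℚ) K (Polynomial.X ^ n) := by
    rw [map_pow, RatFunc.algebraMap_X]; rfl
  have h2 := congrArg RatFunc.intDegree h
  rw [hX, RatFunc.intDegree_polynomial, RatFunc.intDegree_one] at h2
  simp [Polynomial.natDegree_X_pow] at h2
  omega

lemma q_ne_zero : (q : K) ≠ 0 := RatFunc.X_ne_zero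

lemma qint_ne_zero {m : ℤ} (hm : 0 < m) : qint m ≠ 0 := by
  have hq := q_ne_zero
  apply div_ne_zero
  · intro h
    have h1 : q ^ m = q ^ (-m) := by linear_combination (norm := ring_nf) h
    have h2 : q ^ (2 * m) = 1 := by
      rw [two_mul, zpow_add₀ hq]
      nth_rewrite 1 [h1]
      rw [← zpow_add₀ hq]
      simp
    have h3 : q ^ (2 * m).toNat = 1 := by
      rw [← zpow_natCast, Int.toNat_of_nonneg (by omega)]; exact h2
    exact q_pow_ne_one (by omega) h3
  · intro h
    have h1 : q = q⁻¹ := by linear_combination (norm := ring_nf) h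
    have h2 : q ^ 2 = 1 := by
      rw [sq]; nth_rewrite 2 [h1]; exact mul_inv_cancel₀ hq
    exact q_pow_ne_one (by omega) h2

lemma qfact_ne_zero {k m : ℕ} (hk : 0 < k) : qfact k m ≠ 0 := by
  rw [qfact]
  apply Finset.prod_ne_zero_iff.mpr
  intro j _
  exact qint_ne_zero (by positivity)

open MvPolynomial Finsupp

lemma epow_monomial (r : ℕ) (ξ : Fin (r + 2) → ℕ)
    (e : Fin (r + 1) → Module.End K (MvPolynomial (Fin (r + 2)) K))
    (he : ∀ (i : Fin (r + 1)) (b : Fin (r + 2) →₀ ℕ),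
      e i (MvPolynomial.monomial b (1 : K))
        = qint ((ξ i.succ * b i.succ : ℕ) : ℤ) •
            MvPolynomial.monomial
              (b + Finsupp.single i.castSucc 1 - Finsupp.single i.succ 1) (1 : K))
    (i : Fin (r + 1)) (b : Fin (r + 2) →₀ ℕ) (n : ℕ) (hn : n ≤ b i.succ) :
    (e i ^ n) (MvPolynomial.monomial b (1 : K))
      = (∏ j ∈ Finset.range n, qint ((ξ i.succ * (b i.succ - j) : ℕ) : ℤ)) •
        MvPolynomial.monomial
          (b + Finsupp.single i.castSucc n - Finsupp.single i.succ n) (1 : K) := by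
  have hne : i.castSucc ≠ i.succ := by
    intro h
    have := congrArg Fin.val h
    simp at this
  induction n with
  | zero => simp
  | succ n ih =>
    rw [pow_succ', Module.End.mul_apply, ih (by omega), map_smul, he]
    have hb' : (b + Finsupp.single i.castSucc n - Finsupp.single i.succ n) i.succ
        = b i.succ - n := by
      simp [Finsupp.single_apply, hne]
    have key : (b + Finsupp.single i.castSucc n - Finsupp.single i.succ n)
          + Finsupp.single i.castSucc 1 - Finsupp.single i.succ 1
        = b + Finsupp.single i.castSucc (n + 1) - Finsupp.single i.succ (n + 1) := by
      ext j
      simp only [Finsupp.tsub_apply, Finsupp.add_apply, Finsupp.single_apply, Fin.ext_iff,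
        Fin.val_succ, Fin.coe_castSucc]
      split_ifs <;> omega
    rw [hb', key, smul_smul, ← Finset.prod_range_succ]

lemma epow_monomial_full (r : ℕ) (ξ : Fin (r + 2) → ℕ)
    (e : Fin (r + 1) → Module.End K (MvPolynomial (Fin (r + 2)) K))
    (he : ∀ (i : Fin (r + 1)) (b : Fin (r + 2) →₀ ℕ),
      e i (MvPolynomial.monomial b (1 : K))
        = qint ((ξ i.succ * b i.succ : ℕ) : ℤ) •
            MvPolynomial.monomial
              (b + Finsupp.single i.castSucc 1 - Finsupp.single i.succ 1) (1 : K))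
    (i : Fin (r + 1)) (b : Fin (r + 2) →₀ ℕ) :
    (e i ^ (b i.succ)) (MvPolynomial.monomial b (1 : K))
      = qfact (ξ i.succ) (b i.succ) •
        MvPolynomial.monomial
          (b + Finsupp.single i.castSucc (b i.succ) - Finsupp.single i.succ (b i.succ))
          (1 : K) := by
  rw [epow_monomial r ξ e he i b _ le_rfl]
  congr 1
  rw [qfact, ← Finset.prod_range_reflect]
  apply Finset.prod_congr rfl
  intro j hj
  simp only [Finset.mem_range] at hj
  have h : b i.succ - (b i.succ - 1 - j) = j + 1 := by omega
  rw [h]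


/-- applying (Π_{i=0}^{r} e_i^{a_{i+1}+⋯+a_{r+1}}) (with e_r first and
e₀ last) to X^a yields (Π_{i=1}^{r+1} [a_i+⋯+a_{r+1}]^{ξ_i}!)·X₀^s, a nonzero
multiple of X₀^s. -/
theorem stmt19 (r s : ℕ) (ξ : Fin (r + 2) → ℕ) (hξ : ∀ i, 0 < ξ i)
    (a : Fin (r + 2) →₀ ℕ) (ha : ∀ i, 0 < a i) (has : (∑ j : Fin (r + 2), a j) = s)
    (e : Fin (r + 1) → Module.End K (MvPolynomial (Fin (r + 2)) K))
    (he : ∀ (i : Fin (r + 1)) (b : Fin (r + 2) →₀ ℕ),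
      e i (MvPolynomial.monomial b (1 : K))
        = qint ((ξ i.succ * b i.succ : ℕ) : ℤ) •
            MvPolynomial.monomial
              (b + Finsupp.single i.castSucc 1 - Finsupp.single i.succ 1) (1 : K)) :
    (List.ofFn (fun i : Fin (r + 1) =>
        e i ^ (∑ j : Fin (r + 2), if i.succ ≤ j then a j else 0))).prod
        (MvPolynomial.monomial a (1 : K))
      = (∏ i : Fin (r + 1),
          qfact (ξ i.succ) (∑ j : Fin (r + 2), if i.succ ≤ j then a j else 0)) •
          MvPolynomial.monomial (Finsupp.single 0 s) (1 : K) ∧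
    (∏ i : Fin (r + 1),
        qfact (ξ i.succ) (∑ j : Fin (r + 2), if i.succ ≤ j then a j else 0)) ≠ 0 := by
  classical
  -- abbreviations
  let T : Fin (r + 1) → ℕ := fun i => ∑ j : Fin (r + 2), if i.succ ≤ j then a j else 0
  let S : ℕ → ℕ := fun k => ∑ j : Fin (r + 2), if k ≤ (j : ℕ) then a j else 0
  have hTS : ∀ i : Fin (r + 1), T i = S ((i : ℕ) + 1) := by
    intro i
    apply Finset.sum_congr rfl
    intro j _
    simp [Fin.le_def]
  have hStop : S (r + 2) = 0 := by
    apply Finset.sum_eq_zero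
    intro j _
    exact if_neg (by omega)
  have hSstep : ∀ k : ℕ, ∀ hk : k < r + 2, S k = a ⟨k, hk⟩ + S (k + 1) := by
    intro k hk
    have : ∀ j : Fin (r + 2), (if k ≤ (j : ℕ) then a j else 0)
        = (if j = ⟨k, hk⟩ then a j else 0) + (if k + 1 ≤ (j : ℕ) then a j else 0) := by
      intro j
      rcases eq_or_ne (j : ℕ) k with h | h
      · have hj : j = ⟨k, hk⟩ := Fin.ext h
        simp [hj]
      · have hj : j ≠ ⟨k, hk⟩ := fun hh => h (by rw [hh])
        rw [if_neg hj, zero_add]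
        exact if_congr (by omega : (k ≤ (j : ℕ)) ↔ (k + 1 ≤ (j : ℕ))) rfl rfl
    rw [show S k = ∑ j : Fin (r + 2), if k ≤ (j : ℕ) then a j else 0 from rfl]
    rw [Finset.sum_congr rfl (fun j _ => this j), Finset.sum_add_distrib,
      Finset.sum_ite_eq' Finset.univ (⟨k, hk⟩ : Fin (r + 2)) a]
    simp
    rfl
  let B : ℕ → (Fin (r + 2) →₀ ℕ) := fun k =>
    Finsupp.equivFunOnFinite.symm
      (fun j => if (j : ℕ) < k then a j else if (j : ℕ) = k then S k else 0)
  have hB : ∀ k (j : Fin (r + 2)),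
      B k j = if (j : ℕ) < k then a j else if (j : ℕ) = k then S k else 0 := fun _ _ => rfl
  -- the scalar product step
  have hprod : ∀ k : ℕ, ∀ hk : k < r + 1,
      (∏ i : Fin (r + 1), if k ≤ (i : ℕ) then qfact (ξ i.succ) (T i) else 1)
      = qfact (ξ (Fin.succ ⟨k, hk⟩)) (T ⟨k, hk⟩) *
        ∏ i : Fin (r + 1), if k + 1 ≤ (i : ℕ) then qfact (ξ i.succ) (T i) else 1 := by
    intro k hk
    have : ∀ i : Fin (r + 1), (if k ≤ (i : ℕ) then qfact (ξ i.succ) (T i) else 1)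
        = (if i = ⟨k, hk⟩ then qfact (ξ i.succ) (T i) else 1) *
          (if k + 1 ≤ (i : ℕ) then qfact (ξ i.succ) (T i) else 1) := by
      intro i
      rcases eq_or_ne (i : ℕ) k with h | h
      · have hi : i = ⟨k, hk⟩ := Fin.ext h
        simp [hi]
      · have hi : i ≠ ⟨k, hk⟩ := fun hh => h (by rw [hh])
        rw [if_neg hi, one_mul]
        exact if_congr (by omega : (k ≤ (i : ℕ)) ↔ (k + 1 ≤ (i : ℕ))) rfl rfl
    rw [Finset.prod_congr rfl (fun i _ => this i), Finset.prod_mul_distrib,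
      Finset.prod_ite_eq' Finset.univ (⟨k, hk⟩ : Fin (r + 1))
        (fun i => qfact (ξ i.succ) (T i))]
    simp
  -- main downward induction
  have main : ∀ d k, k + d = r + 1 →
      ((List.ofFn (fun i : Fin (r + 1) => e i ^ T i)).drop k).prod
          (MvPolynomial.monomial a (1 : K))
        = (∏ i : Fin (r + 1), if k ≤ (i : ℕ) then qfact (ξ i.succ) (T i) else 1) •
          MvPolynomial.monomial (B k) (1 : K) := by
    intro d
    induction d with
    | zero =>
      intro k hdk
      have hk : k = r + 1 := by omega
      subst hk
      rw [List.drop_eq_nil_of_le (by simp), List.prod_nil]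
      rw [Finset.prod_eq_one (fun i _ => if_neg (by omega)), one_smul]
      have hBa : B (r + 1) = a := by
        ext j
        rw [hB]
        rcases eq_or_ne (j : ℕ) (r + 1) with h | h
        · have hj : j = ⟨r + 1, by omega⟩ := Fin.ext h
          have := hSstep (r + 1) (by omega)
          rw [hStop] at this
          simp [hj, this]
        · have : (j : ℕ) < r + 1 := by omega
          simp [this]
      rw [hBa]
      rfl
    | succ d ih =>
      intro k hdk
      have hkr : k < r + 1 := by omega
      have hk : k < (List.ofFn (fun i : Fin (r + 1) => e i ^ T i)).length := by
        simp [hkr]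
      have key : ∀ (pf : k < r + 1),
          (e ⟨k, pf⟩ ^ T ⟨k, pf⟩) (MvPolynomial.monomial (B (k + 1)) (1 : K))
            = qfact (ξ (Fin.succ ⟨k, pf⟩)) (T ⟨k, pf⟩) •
              MvPolynomial.monomial (B k) (1 : K) := by
        intro pf
        set i₀ : Fin (r + 1) := ⟨k, pf⟩ with hi₀
        have hsucc : (i₀.succ : Fin (r + 2)) = ⟨k + 1, by omega⟩ := rfl
        have hbt : (B (k + 1)) i₀.succ = T i₀ := by
          rw [hTS, hsucc, hB]
          simp
          rfl
        have hv : (B (k + 1)) i₀.succ = S (k + 1) := by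
          rw [hsucc, hB]; simp
        have hBk : B (k + 1) + Finsupp.single i₀.castSucc ((B (k + 1)) i₀.succ)
            - Finsupp.single i₀.succ ((B (k + 1)) i₀.succ) = B k := by
          ext j
          rw [Finsupp.tsub_apply, Finsupp.add_apply, Finsupp.single_apply,
            Finsupp.single_apply, hv, hB, hB]
          have hcs : ((i₀.castSucc : Fin (r + 2)) = j) ↔ ((j : ℕ) = k) := by
            rw [Fin.ext_iff]; simp [eq_comm]
            exact eq_comm
          have hsc : ((i₀.succ : Fin (r + 2)) = j) ↔ ((j : ℕ) = k + 1) := by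
            rw [Fin.ext_iff]; simp [eq_comm]
            exact Iff.rfl
          rw [if_congr hcs rfl rfl, if_congr hsc rfl rfl]
          rcases eq_or_ne (j : ℕ) k with h | h
          · have hk2 : k < r + 2 := by omega
            have hj : j = ⟨k, hk2⟩ := Fin.ext h
            have hstep := hSstep k hk2
            rw [← hj] at hstep
            rw [if_pos (show (j : ℕ) < k + 1 by omega), if_pos h,
              if_neg (show ¬(j : ℕ) = k + 1 by omega),
              if_neg (show ¬(j : ℕ) < k by omega), if_pos h]
            omega
          · rcases eq_or_ne (j : ℕ) (k + 1) with h2 | h2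
            · rw [if_neg (show ¬(j : ℕ) < k + 1 by omega), if_pos h2, if_neg h,
                if_neg (show ¬(j : ℕ) < k by omega), if_neg h]
              omega
            · split_ifs <;> omega
        rw [← hbt, epow_monomial_full r ξ e he i₀ (B (k + 1)), hBk]
      rw [List.drop_eq_getElem_cons hk, List.prod_cons, Module.End.mul_apply,
        ih (k + 1) (by omega), map_smul, List.getElem_ofFn, key, smul_smul,
        hprod k hkr]
      exact congrArg (· • _) (mul_comm _ _)
  have hmain := main (r + 1) 0 (by omega)
  rw [List.drop_zero] at hmain
  have hB0 : B 0 = Finsupp.single 0 s := by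
    ext j
    rw [hB, Finsupp.single_apply]
    rcases eq_or_ne (j : ℕ) 0 with h | h
    · have hj : (0 : Fin (r + 2)) = j := Fin.ext (by simp [h])
      rw [if_neg (by omega), if_pos h, if_pos hj]
      rw [show S 0 = ∑ j : Fin (r + 2), if 0 ≤ (j : ℕ) then a j else 0 from rfl]
      simp [has]
    · have hj : (0 : Fin (r + 2)) ≠ j := by
        intro hh
        apply h
        rw [← hh]
        simp
      rw [if_neg (by omega), if_neg h, if_neg hj]
  have hprod0 : (∏ i : Fin (r + 1), if 0 ≤ (i : ℕ) then qfact (ξ i.succ) (T i) else 1)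
      = ∏ i : Fin (r + 1), qfact (ξ i.succ) (T i) := by
    apply Finset.prod_congr rfl
    intro i _
    rw [if_pos (Nat.zero_le _)]
  rw [hB0, hprod0] at hmain
  refine ⟨hmain, ?_⟩
  rw [Finset.prod_ne_zero_iff]
  intro i _
  exact qfact_ne_zero (hξ i.succ)
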